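/- Let A = A_1 × ... × A_m with A_i = A_{m-i+1}. If H is a prefix-free, symmetric set of partial points (symmetric meaning ∪H = ∪H_rev) with |H|² ≤ |A|/4, then min(|∪H|, |A| - |∪H|) ≤ |H|² + O(|H|⁴/|A|). -/

import Mathlib

/-- A partial point of the product set `A 1 × ⋯ × A m`: a tuple of some length `ℓ ≤ m`. -/
abbrev PPoint (α : Type) (m : ℕ) := (ℓ : Fin (m + 1)) × (Fin ℓ.val → α)

variable {α : Type} {m : ℕ}

/-- The subcube of `A = A 1 × ⋯ × A m` indexed by a partial point `p`: all points of `A`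
whose first `|p|` coordinates agree with `p`. -/
def cubeOf [DecidableEq α] (A : Fin m → Finset α) (p : PPoint α m) : Finset (Fin m → α) :=
  (Fintype.piFinset A).filter
    (fun x => ∀ j : Fin p.1.val, x (Fin.castLE (Nat.lt_succ_iff.mp p.1.isLt) j) = p.2 j)

/-- The reversed subcube indexed by a partial point `p` of length `k`: all points of `A`
whose last `k` coordinates equal the reversal of `p`. -/
def cubeRevOf [DecidableEq α] (A : Fin m → Finset α) (p : PPoint α m) : Finset (Fin m → α) :=
  (Fintype.piFinset A).filter
    (fun x => ∀ j : Fin p.1.val,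
      x ⟨m - 1 - j.val, by have h1 := j.isLt; have h2 := p.1.isLt; omega⟩ = p.2 j)

/-- `p` is a prefix of `q`. -/
def IsPrefixP (p q : PPoint α m) : Prop :=
  ∃ h : p.1.val ≤ q.1.val, ∀ j : Fin p.1.val, q.2 (Fin.castLE h j) = p.2 j

/-- A set of partial points is prefix-free if none is a proper prefix of another. -/
def PrefixFreeP (H : Finset (PPoint α m)) : Prop :=
  ∀ p ∈ H, ∀ q ∈ H, IsPrefixP p q → p = q

/-- The union `∪H` of the subcubes indexed by a set of partial points. -/
def unionCube [DecidableEq α] (A : Fin m → Finset α) (H : Finset (PPoint α m)) :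
    Finset (Fin m → α) :=
  H.biUnion (cubeOf A)

/-- The union `∪H_rev` of the reversed subcubes indexed by a set of partial points. -/
def unionCubeRev [DecidableEq α] (A : Fin m → Finset α) (H : Finset (PPoint α m)) :
    Finset (Fin m → α) :=
  H.biUnion (cubeRevOf A)

lemma lemA [DecidableEq α] (A : Fin m → Finset α) (p q : PPoint α m)
    (hpq : p.1.val + q.1.val ≤ m) :
    (Fintype.piFinset A).card * ((cubeOf A p) ∩ (cubeRevOf A q)).card ≤
      (cubeOf A p).card * (cubeRevOf A q).card := by
  classical
  set k := p.1.val with hk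
  have key : (((cubeOf A p) ∩ (cubeRevOf A q)) ×ˢ (Fintype.piFinset A)).card ≤
      ((cubeOf A p) ×ˢ (cubeRevOf A q)).card := by
    apply Finset.card_le_card_of_injOn
      (fun zy => (fun i => if i.val < k then zy.1 i else zy.2 i,
                  fun i => if i.val < k then zy.2 i else zy.1 i))
    · rintro ⟨z, y⟩ hzy
      simp only [Finset.mem_coe, Finset.mem_product, Finset.mem_inter] at hzy
      obtain ⟨⟨hz1, hz2⟩, hy⟩ := hzy
      simp only [cubeOf, cubeRevOf, Finset.mem_filter, Fintype.mem_piFinset] at hz1 hz2 hy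
      simp only [Finset.mem_coe, Finset.mem_product, cubeOf, cubeRevOf, Finset.mem_filter, Fintype.mem_piFinset]
      refine ⟨⟨fun i => ?_, fun j => ?_⟩, ⟨fun i => ?_, fun j => ?_⟩⟩
      · by_cases h : i.val < k <;> simp [h, hz1.1 i, hy i]
      · have hj : (Fin.castLE (Nat.lt_succ_iff.mp p.1.isLt) j).val < k := j.isLt
        exact (if_pos hj).trans (hz1.2 j)
      · by_cases h : i.val < k <;> simp [h, hz1.1 i, hy i]
      · have hj : ¬ (m - 1 - j.val < k) := by
          have := j.isLt; omega
        simpa [hj] using hz2.2 j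
    · rintro ⟨z, y⟩ hzy ⟨z', y'⟩ hzy' heq
      simp only [Prod.mk.injEq] at heq
      obtain ⟨h1, h2⟩ := heq
      have h1' := fun i => congrFun h1 i
      have h2' := fun i => congrFun h2 i
      refine Prod.ext ?_ ?_ <;> funext i <;>
        [ (by_cases h : i.val < k;
           · simpa [h] using h1' i
           · simpa [h] using h2' i);
          (by_cases h : i.val < k;
           · simpa [h] using h2' i
           · simpa [h] using h1' i) ]
  simpa [Finset.card_product, Nat.mul_comm] using key

lemma lemB [DecidableEq α] (A : Fin m → Finset α) (p q : PPoint α m)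
    (hpq : m < p.1.val + q.1.val) :
    ((cubeOf A p) ∩ (cubeRevOf A q)).card ≤ 1 := by
  rw [Finset.card_le_one]
  intro x hx y hy
  simp only [Finset.mem_inter, cubeOf, cubeRevOf, Finset.mem_filter] at hx hy
  funext i
  by_cases h : i.val < p.1.val
  · have e1 := hx.1.2 ⟨i.val, h⟩
    have e2 := hy.1.2 ⟨i.val, h⟩
    have e : Fin.castLE (Nat.lt_succ_iff.mp p.1.isLt) (⟨i.val, h⟩ : Fin p.1.val) = i :=
      Fin.ext rfl
    rw [e] at e1 e2
    rw [e1, e2]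
  · have him := i.isLt
    have hq := q.1.isLt
    have hj : m - 1 - i.val < q.1.val := by omega
    have e1 := hx.2.2 ⟨m - 1 - i.val, hj⟩
    have e2 := hy.2.2 ⟨m - 1 - i.val, hj⟩
    have e : (⟨m - 1 - (m - 1 - i.val), by omega⟩ : Fin m) = i := Fin.ext (by simp; omega)
    rw [e] at e1 e2
    rw [e1, e2]

lemma cube_disj [DecidableEq α] (A : Fin m → Finset α) {H : Finset (PPoint α m)}
    (hPF : PrefixFreeP H) :
    ∀ p ∈ H, ∀ q ∈ H, p ≠ q → Disjoint (cubeOf A p) (cubeOf A q) := by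
  intro p hp q hq hne
  rw [Finset.disjoint_left]
  intro x hxp hxq
  simp only [cubeOf, Finset.mem_filter] at hxp hxq
  rcases le_total p.1.val q.1.val with hle | hle
  · refine hne (hPF p hp q hq ⟨hle, fun j => ?_⟩)
    have e1 := hxq.2 (Fin.castLE hle j)
    have e2 := hxp.2 j
    have e : Fin.castLE (Nat.lt_succ_iff.mp q.1.isLt) (Fin.castLE hle j)
        = Fin.castLE (Nat.lt_succ_iff.mp p.1.isLt) j := Fin.ext rfl
    rw [← e1, ← e2]
    exact congrArg x e
  · refine hne (hPF q hq p hp ⟨hle, fun j => ?_⟩).symm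
    have e1 := hxp.2 (Fin.castLE hle j)
    have e2 := hxq.2 j
    have e : Fin.castLE (Nat.lt_succ_iff.mp p.1.isLt) (Fin.castLE hle j)
        = Fin.castLE (Nat.lt_succ_iff.mp q.1.isLt) j := Fin.ext rfl
    rw [← e1, ← e2]
    exact congrArg x e

lemma cubeRev_disj [DecidableEq α] (A : Fin m → Finset α) {H : Finset (PPoint α m)}
    (hPF : PrefixFreeP H) :
    ∀ p ∈ H, ∀ q ∈ H, p ≠ q → Disjoint (cubeRevOf A p) (cubeRevOf A q) := by
  intro p hp q hq hne
  rw [Finset.disjoint_left]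
  intro x hxp hxq
  simp only [cubeRevOf, Finset.mem_filter] at hxp hxq
  rcases le_total p.1.val q.1.val with hle | hle
  · refine hne (hPF p hp q hq ⟨hle, fun j => ?_⟩)
    have e1 := hxq.2 (Fin.castLE hle j)
    have e2 := hxp.2 j
    have e : (⟨m - 1 - (Fin.castLE hle j).val, by have := j.isLt; have := q.1.isLt; omega⟩ : Fin m)
        = ⟨m - 1 - j.val, by have := j.isLt; have := p.1.isLt; omega⟩ := Fin.ext rfl
    rw [← e1, ← e2]
    exact congrArg x e
  · refine hne (hPF q hq p hp ⟨hle, fun j => ?_⟩).symm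
    have e1 := hxp.2 (Fin.castLE hle j)
    have e2 := hxq.2 j
    have e : (⟨m - 1 - (Fin.castLE hle j).val, by have := j.isLt; have := p.1.isLt; omega⟩ : Fin m)
        = ⟨m - 1 - j.val, by have := j.isLt; have := q.1.isLt; omega⟩ := Fin.ext rfl
    rw [← e1, ← e2]
    exact congrArg x e

lemma key_ineq [DecidableEq α] (A : Fin m → Finset α) (H : Finset (PPoint α m))
    (hPF : PrefixFreeP H) (hsym : unionCube A H = unionCubeRev A H) :
    (Fintype.piFinset A).card * (unionCube A H).card ≤
      (unionCube A H).card * (unionCube A H).card +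
        (Fintype.piFinset A).card * H.card ^ 2 := by
  classical
  set N := (Fintype.piFinset A).card
  set S := (unionCube A H).card with hS
  -- covering
  have hcov : unionCube A H ⊆
      (H ×ˢ H).biUnion (fun pq => (cubeOf A pq.1) ∩ (cubeRevOf A pq.2)) := by
    intro x hx
    have hx' : x ∈ unionCubeRev A H := hsym ▸ hx
    rw [unionCube, Finset.mem_biUnion] at hx
    rw [unionCubeRev, Finset.mem_biUnion] at hx'
    obtain ⟨p, hp, hxp⟩ := hx
    obtain ⟨q, hq, hxq⟩ := hx'
    rw [Finset.mem_biUnion]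
    exact ⟨(p, q), Finset.mem_product.2 ⟨hp, hq⟩, Finset.mem_inter.2 ⟨hxp, hxq⟩⟩
  have hcov' : S ≤ ∑ pq ∈ H ×ˢ H, ((cubeOf A pq.1) ∩ (cubeRevOf A pq.2)).card :=
    le_trans (Finset.card_le_card hcov) (Finset.card_biUnion_le)
  have hterm : ∀ pq ∈ H ×ˢ H,
      N * ((cubeOf A pq.1) ∩ (cubeRevOf A pq.2)).card ≤
        (cubeOf A pq.1).card * (cubeRevOf A pq.2).card + N := by
    intro pq _
    rcases le_or_gt (pq.1.1.val + pq.2.1.val) m with h | h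
    · exact le_trans (lemA A pq.1 pq.2 h) (Nat.le_add_right _ _)
    · calc N * ((cubeOf A pq.1) ∩ (cubeRevOf A pq.2)).card
          ≤ N * 1 := Nat.mul_le_mul_left _ (lemB A pq.1 pq.2 h)
        _ = N := Nat.mul_one _
        _ ≤ _ := Nat.le_add_left _ _
  have hsum1 : S = ∑ p ∈ H, (cubeOf A p).card :=
    Finset.card_biUnion (cube_disj A hPF)
  have hsum2 : S = ∑ q ∈ H, (cubeRevOf A q).card := by
    rw [hS, hsym]
    exact Finset.card_biUnion (cubeRev_disj A hPF)
  calc N * S ≤ N * ∑ pq ∈ H ×ˢ H, ((cubeOf A pq.1) ∩ (cubeRevOf A pq.2)).card :=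
        Nat.mul_le_mul_left _ hcov'
    _ = ∑ pq ∈ H ×ˢ H, N * ((cubeOf A pq.1) ∩ (cubeRevOf A pq.2)).card :=
        Finset.mul_sum _ _ _
    _ ≤ ∑ pq ∈ H ×ˢ H, ((cubeOf A pq.1).card * (cubeRevOf A pq.2).card + N) :=
        Finset.sum_le_sum hterm
    _ = (∑ p ∈ H, (cubeOf A p).card) * (∑ q ∈ H, (cubeRevOf A q).card) + (H ×ˢ H).card * N := by
        rw [Finset.sum_add_distrib, Finset.sum_const, smul_eq_mul, Finset.sum_mul_sum,
          Finset.sum_product]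
    _ = S * S + N * H.card ^ 2 := by
        rw [← hsum1, ← hsum2, Finset.card_product]
        ring

/-- If `H` is a prefix-free symmetric set of partial points (`∪H = ∪H_rev`) with
`|H|² ≤ |A|/4`, then `min(|∪H|, |A| - |∪H|) ≤ |H|² + O(|H|⁴/|A|)`. -/
theorem stmt14 :
    ∃ Cst : ℝ, 0 < Cst ∧
      ∀ (α : Type) [DecidableEq α] (m : ℕ) (A : Fin m → Finset α),
        (∀ i, A i = A (Fin.rev i)) →
        ∀ H : Finset (PPoint α m), PrefixFreeP H →
          unionCube A H = unionCubeRev A H →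
          4 * H.card ^ 2 ≤ (Fintype.piFinset A).card →
          min ((unionCube A H).card : ℝ)
              (((Fintype.piFinset A).card : ℝ) - (unionCube A H).card) ≤
            (H.card : ℝ) ^ 2 + Cst * (H.card : ℝ) ^ 4 / (Fintype.piFinset A).card := by
  refine ⟨4, by norm_num, ?_⟩
  intro α _ m A _ H hPF hsym _
  classical
  have hsubset : unionCube A H ⊆ Fintype.piFinset A := by
    intro x hx
    rw [unionCube, Finset.mem_biUnion] at hx
    obtain ⟨p, _, hxp⟩ := hx
    exact (Finset.mem_filter.1 hxp).1
  set Nn := (Fintype.piFinset A).card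
  set Sn := (unionCube A H).card
  have hSN : Sn ≤ Nn := Finset.card_le_card hsubset
  have hkeyN := key_ineq A H hPF hsym
  set n : ℝ := (Nn : ℝ) with hn
  set s : ℝ := (Sn : ℝ) with hsdef
  set h : ℝ := (H.card : ℝ) with hhdef
  have hkey : n * s ≤ s * s + n * h ^ 2 := by
    rw [hn, hsdef, hhdef]
    exact_mod_cast hkeyN
  have hs0 : 0 ≤ s := Nat.cast_nonneg _
  have hsn : s ≤ n := Nat.cast_le.2 hSN
  have hh0 : 0 ≤ h := Nat.cast_nonneg _
  have hnge : (0:ℝ) ≤ n := by rw [hn]; exact Nat.cast_nonneg _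
  rcases eq_or_lt_of_le hnge with hn0 | hn0
  · -- n = 0
    have hneq : n = 0 := hn0.symm
    have hseq : s = 0 := le_antisymm (by linarith) hs0
    rw [hneq, hseq]
    simp
    positivity
  · set y : ℝ := min s (n - s) with hy
    have hy0 : 0 ≤ y := le_min hs0 (by linarith)
    have hyle1 : y ≤ s := min_le_left _ _
    have hyle2 : y ≤ n - s := min_le_right _ _
    have hyprod : y * (n - y) = s * (n - s) := by
      rcases min_cases s (n - s) with ⟨h1, h2⟩ | ⟨h1, h2⟩ <;> rw [hy, h1] <;> ring
    have h1 : y * (n - y) ≤ n * h ^ 2 := by rw [hyprod]; nlinarith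
    have h2 : 2 * y ≤ n := by linarith
    have h3 : y ≤ 2 * h ^ 2 := by nlinarith
    have h4 : y * n ≤ h ^ 2 * n + 4 * h ^ 4 := by nlinarith
    have hfin : y ≤ h ^ 2 + 4 * h ^ 4 / n := by
      rw [← mul_le_mul_iff_of_pos_right hn0]
      calc y * n ≤ h ^ 2 * n + 4 * h ^ 4 := h4
        _ = (h ^ 2 + 4 * h ^ 4 / n) * n := by field_simp
    exact hfin
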